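/- Fix λ > 0. For every real x < −λ²s, the one-sided limits f₊(x) := lim_{ε→0⁺} f(x+iε; λ) and f₋(x) := lim_{ε→0⁺} f(x−iε; λ) exist and satisfy f₊(x) − f₋(x) = |x|^{α} e^{2(−1)^{k+1} λ^{2k}/x^{k}} = |x|^{α} e^{−2λ^{2k}/|x|^{k}}. -/

import Mathlib

open Complex Set MeasureTheory Filter Topology

/-- The Cauchy-type integral
`f(z;λ) = (e^{−z}/(2πi)) ∫_{−∞}^{−λ²s} |x|^α e^x e^{2(−1)^{k+1} λ^{2k}/x^k} (x−z)^{−1} dx`. -/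
noncomputable def fFun (k : ℕ) (α s : ℝ) (lam : ℝ) (z : ℂ) : ℂ :=
  (Complex.exp (-z) / (2 * Real.pi * Complex.I)) *
    ∫ x in Iic (-(lam ^ 2 * s)),
      ((|x| ^ α : ℝ) : ℂ) * Complex.exp (x : ℂ) *
        Complex.exp (2 * (-1 : ℂ) ^ (k + 1) * ((lam ^ (2 * k) : ℝ) : ℂ) * (x : ℂ) ^ (-(k : ℤ)))
        / ((x : ℂ) - z)

set_option maxHeartbeats 1000000 in
/-- Key limit for the Cauchy transform of an integrable function near the cut. -/
lemma aux_tendsto_cauchy (G : ℝ → ℂ) (c x₀ δ : ℝ) (σ : ℝ) (hσ : σ = 1 ∨ σ = -1)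
    (hδ : 0 < δ) (hbc : x₀ + δ < c) (hGi : IntegrableOn G (Iic c)) (L : ℝ)
    (hL : ∀ t ∈ Icc (x₀ - δ) (x₀ + δ), ‖G t - G x₀‖ ≤ L * |t - x₀|) :
    Tendsto (fun ε : ℝ => ∫ t in Iic c, G t / ((t : ℂ) - ((x₀ : ℂ) + (σ : ℂ) * (ε : ℂ) * Complex.I)))
      (𝓝[>] (0 : ℝ))
      (𝓝 ((∫ t in Iic (x₀ - δ) ∪ Ioc (x₀ + δ) c, G t / ((t : ℂ) - (x₀ : ℂ))) +
          (∫ t in Ioc (x₀ - δ) (x₀ + δ), (G t - G x₀) / ((t : ℂ) - (x₀ : ℂ))) +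
          G x₀ * ((σ : ℂ) * (Real.pi : ℂ) * Complex.I))) := by
  have hσ0 : σ ≠ 0 := by rcases hσ with h | h <;> rw [h] <;> norm_num
  set S : Set ℝ := Iic (x₀ - δ) ∪ Ioc (x₀ + δ) c with hS
  set Iset : Set ℝ := Ioc (x₀ - δ) (x₀ + δ) with hIset
  have hSmeas : MeasurableSet S := measurableSet_Iic.union measurableSet_Ioc
  have hImeas : MeasurableSet Iset := measurableSet_Ioc
  have hSsub : S ⊆ Iic c := by
    rintro t (ht | ht)
    · rw [mem_Iic] at ht ⊢
      linarith
    · rw [mem_Ioc] at ht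
      rw [mem_Iic]
      exact ht.2
  have hIsub : Iset ⊆ Iic c := by
    intro t ht
    rw [mem_Ioc] at ht
    rw [mem_Iic]
    linarith [ht.2]
  have hIic_eq : Iic c = S ∪ Iset := by
    rw [hS, hIset, union_right_comm, Iic_union_Ioc_eq_Iic (by linarith : x₀ - δ ≤ x₀ + δ),
      Iic_union_Ioc_eq_Iic hbc.le]
  have hdisj : Disjoint S Iset := by
    rw [Set.disjoint_left]
    rintro t (ht | ht) ht'
    · rw [mem_Iic] at ht
      rw [mem_Ioc] at ht'
      linarith [ht'.1]
    · rw [mem_Ioc] at ht ht'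
      linarith [ht.1, ht'.2]
  -- nonvanishing of `↑t - z` for `z` off the real line
  have hne : ∀ (z : ℂ), z.im ≠ 0 → ∀ t : ℝ, ((t : ℂ) - z) ≠ 0 := by
    intro z hz t h
    apply hz
    have := congrArg Complex.im h
    simpa using this.symm
  -- integrability of `(t - z)⁻¹`
  have hinv_cont : ∀ (z : ℂ), z.im ≠ 0 → Continuous (fun t : ℝ => ((t : ℂ) - z)⁻¹) := by
    intro z hz
    exact (Complex.continuous_ofReal.sub continuous_const).inv₀ (hne z hz)
  -- integrability of `G t / (t - z)` on subsets of `Iic c`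
  have hint : ∀ (z : ℂ), z.im ≠ 0 → ∀ s : Set ℝ, s ⊆ Iic c →
      IntegrableOn (fun t => G t / ((t : ℂ) - z)) s := by
    intro z hz s hs
    have hmeas : AEStronglyMeasurable (fun t : ℝ => G t * ((t : ℂ) - z)⁻¹)
        (volume.restrict s) :=
      (hGi.mono_set hs).aestronglyMeasurable.mul (hinv_cont z hz).aestronglyMeasurable
    have goal2 : IntegrableOn (fun t => G t * ((t : ℂ) - z)⁻¹) s := by
      refine Integrable.mono' (((hGi.mono_set hs).norm).div_const |z.im|) hmeas
        (ae_of_all _ fun t => ?_)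
      rw [norm_mul, norm_inv]
      have h1 : |z.im| ≤ ‖(t : ℂ) - z‖ := by
        have h := Complex.abs_im_le_norm ((t : ℂ) - z)
        simp only [Complex.sub_im, Complex.ofReal_im, zero_sub, abs_neg] at h
        simpa using h
      have h2 : 0 < |z.im| := _root_.abs_pos.2 hz
      rw [div_eq_mul_inv]
      gcongr
    exact goal2.congr (ae_of_all _ fun t => (div_eq_mul_inv (G t) _).symm)
  -- decomposition of the integral
  have hdecomp : ∀ z : ℂ, z.im ≠ 0 →
      ∫ t in Iic c, G t / ((t : ℂ) - z) =
        (∫ t in S, G t / ((t : ℂ) - z)) +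
        ((∫ t in Iset, (G t - G x₀) / ((t : ℂ) - z)) +
          G x₀ * ∫ t in Iset, ((t : ℂ) - z)⁻¹) := by
    intro z hz
    have h2 : IntegrableOn (fun t : ℝ => ((t : ℂ) - z)⁻¹) Iset :=
      (hinv_cont z hz).integrableOn_Ioc
    have h1 : IntegrableOn (fun t : ℝ => (G t - G x₀) / ((t : ℂ) - z)) Iset := by
      have heq : (fun t : ℝ => (G t - G x₀) / ((t : ℂ) - z)) =
          fun t : ℝ => G t / ((t : ℂ) - z) - G x₀ * ((t : ℂ) - z)⁻¹ := by
        funext t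
        rw [sub_div, div_eq_mul_inv]
        ring
      rw [heq]
      exact (hint z hz Iset hIsub).sub (h2.const_mul _)
    rw [hIic_eq, setIntegral_union hdisj hImeas (hint z hz S hSsub) (hint z hz Iset hIsub)]
    congr 1
    have heq2 : ∫ t in Iset, G t / ((t : ℂ) - z) =
        ∫ t in Iset, ((G t - G x₀) / ((t : ℂ) - z) + G x₀ * ((t : ℂ) - z)⁻¹) := by
      refine setIntegral_congr_fun hImeas fun t _ => ?_
      rw [div_eq_mul_inv, div_eq_mul_inv, sub_mul]
      ring
    rw [heq2, integral_add h1 (h2.const_mul _), integral_const_mul]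
  -- explicit value of the third integral
  have hT3 : ∀ z : ℂ, z.im ≠ 0 →
      ∫ t in Iset, ((t : ℂ) - z)⁻¹ =
        Complex.log (((x₀ + δ : ℝ) : ℂ) - z) - Complex.log (((x₀ - δ : ℝ) : ℂ) - z) := by
    intro z hz
    have hle : x₀ - δ ≤ x₀ + δ := by linarith
    rw [hIset, ← intervalIntegral.integral_of_le hle]
    have hderiv : ∀ t ∈ uIcc (x₀ - δ) (x₀ + δ),
        HasDerivAt (fun u : ℝ => Complex.log ((u : ℂ) - z)) (((t : ℂ) - z)⁻¹) t := by
      intro t _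
      have hsp : ((t : ℂ) - z) ∈ Complex.slitPlane := by
        rw [Complex.mem_slitPlane_iff]
        right
        simpa using neg_ne_zero.2 hz
      have h1 : HasDerivAt (fun w : ℂ => Complex.log (w - z)) (((t : ℂ) - z)⁻¹) (t : ℂ) := by
        have h := (Complex.hasDerivAt_log hsp).comp (t : ℂ)
          ((hasDerivAt_id ((t : ℂ))).sub_const z)
        rw [mul_one] at h
        exact h
      exact h1.comp_ofReal
    rw [intervalIntegral.integral_eq_sub_of_hasDerivAt hderiv
      ((hinv_cont z hz).intervalIntegrable _ _)]
  set zf : ℝ → ℂ := fun ε => (x₀ : ℂ) + (σ : ℂ) * (ε : ℂ) * Complex.I with hzf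
  have hzim : ∀ ε : ℝ, ε ∈ Ioi (0:ℝ) → (zf ε).im ≠ 0 := by
    intro ε hε
    have h : (zf ε).im = σ * ε := by simp [hzf]
    rw [h]
    exact mul_ne_zero hσ0 (ne_of_gt hε)
  have hzcont : Continuous zf := by
    exact continuous_const.add
      ((continuous_const.mul Complex.continuous_ofReal).mul continuous_const)
  have hztend : Tendsto zf (𝓝[>] (0 : ℝ)) (𝓝 (x₀ : ℂ)) := by
    have h0 : zf 0 = (x₀ : ℂ) := by simp [hzf]
    have h := (hzcont.tendsto 0).mono_left (nhdsWithin_le_nhds (s := Ioi (0:ℝ)))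
    rwa [h0] at h
  have hdist : ∀ t ∈ S, δ ≤ |t - x₀| := by
    rintro t (ht | ht)
    · rw [mem_Iic] at ht
      rw [_root_.abs_of_nonpos (by linarith)]
      linarith
    · rw [mem_Ioc] at ht
      rw [_root_.abs_of_nonneg (by linarith [ht.1])]
      linarith [ht.1]
  -- limit of the first term
  have hT1 : Tendsto (fun ε : ℝ => ∫ t in S, G t / ((t : ℂ) - zf ε)) (𝓝[>] (0 : ℝ))
      (𝓝 (∫ t in S, G t / ((t : ℂ) - (x₀ : ℂ)))) := by
    refine tendsto_integral_filter_of_dominated_convergence (fun t => ‖G t‖ / δ) ?_ ?_ ?_ ?_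
    · filter_upwards [self_mem_nhdsWithin] with ε hε
      exact (hint (zf ε) (hzim ε hε) S hSsub).aestronglyMeasurable
    · filter_upwards [self_mem_nhdsWithin] with ε hε
      refine (ae_restrict_iff' hSmeas).2 (ae_of_all _ fun t ht => ?_)
      rw [norm_div]
      have h1 : δ ≤ ‖(t : ℂ) - zf ε‖ := by
        refine le_trans (hdist t ht) ?_
        have h := Complex.abs_re_le_norm ((t : ℂ) - zf ε)
        have hre : ((t : ℂ) - zf ε).re = t - x₀ := by simp [hzf]
        rw [hre] at h
        simpa using h
      gcongr
    · exact ((hGi.mono_set hSsub).norm).div_const δ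
    · refine (ae_restrict_iff' hSmeas).2 (ae_of_all _ fun t ht => ?_)
      have hne0 : ((t : ℂ) - (x₀ : ℂ)) ≠ 0 := by
        have hd := hdist t ht
        rw [sub_ne_zero]
        intro h
        have ht' : t = x₀ := by exact_mod_cast h
        rw [ht'] at hd
        simp at hd
        linarith
      exact Tendsto.div tendsto_const_nhds (tendsto_const_nhds.sub hztend) hne0
  -- limit of the second term
  have hL0 : 0 ≤ L := by
    have hmem : x₀ + δ ∈ Icc (x₀ - δ) (x₀ + δ) := ⟨by linarith, le_refl _⟩
    have h := le_trans (norm_nonneg (G (x₀ + δ) - G x₀)) (hL _ hmem)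
    have habs : |x₀ + δ - x₀| = δ := by rw [add_sub_cancel_left, _root_.abs_of_pos hδ]
    rw [habs] at h
    nlinarith
  have hT2 : Tendsto (fun ε : ℝ => ∫ t in Iset, (G t - G x₀) / ((t : ℂ) - zf ε)) (𝓝[>] (0 : ℝ))
      (𝓝 (∫ t in Iset, (G t - G x₀) / ((t : ℂ) - (x₀ : ℂ)))) := by
    refine tendsto_integral_filter_of_dominated_convergence (fun _ => L) ?_ ?_ ?_ ?_
    · filter_upwards [self_mem_nhdsWithin] with ε hε
      have hm : AEStronglyMeasurable
          (fun t : ℝ => (G t - G x₀) * ((t : ℂ) - zf ε)⁻¹) (volume.restrict Iset) :=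
        ((hGi.mono_set hIsub).aestronglyMeasurable.sub aestronglyMeasurable_const).mul
          (hinv_cont (zf ε) (hzim ε hε)).aestronglyMeasurable
      exact hm.congr (ae_of_all _ fun t => (div_eq_mul_inv _ _).symm)
    · filter_upwards [self_mem_nhdsWithin] with ε hε
      refine (ae_restrict_iff' hImeas).2 (ae_of_all _ fun t ht => ?_)
      rcases eq_or_ne t x₀ with rfl | htne
      · simp only [sub_self, zero_div, norm_zero]
        exact hL0
      · rw [norm_div]
        have htx : (0:ℝ) < |t - x₀| := _root_.abs_pos.2 (sub_ne_zero.2 htne)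
        have h1 : |t - x₀| ≤ ‖(t : ℂ) - zf ε‖ := by
          have h := Complex.abs_re_le_norm ((t : ℂ) - zf ε)
          have hre : ((t : ℂ) - zf ε).re = t - x₀ := by simp [hzf]
          rw [hre] at h
          simpa using h
        calc ‖G t - G x₀‖ / ‖(t : ℂ) - zf ε‖ ≤ (L * |t - x₀|) / |t - x₀| := by
              gcongr
              exact hL t (Ioc_subset_Icc_self ht)
          _ = L := by rw [mul_div_assoc, div_self htx.ne', mul_one]
    · exact integrableOn_const measure_Ioc_lt_top.ne
    · have hx₀ : ∀ᵐ t ∂(volume.restrict Iset), t ≠ x₀ := by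
        refine ae_restrict_of_ae ?_
        have h0 : volume ({x₀} : Set ℝ) = 0 := measure_singleton x₀
        filter_upwards [compl_mem_ae_iff.2 h0] with t ht
        simpa using ht
      filter_upwards [hx₀] with t ht
      have hne0 : ((t : ℂ) - (x₀ : ℂ)) ≠ 0 := by
        rw [sub_ne_zero]
        exact_mod_cast ht
      exact Tendsto.div tendsto_const_nhds (tendsto_const_nhds.sub hztend) hne0
  -- limit of the third term
  have hT3lim : Tendsto (fun ε : ℝ =>
        Complex.log (((x₀ + δ : ℝ) : ℂ) - zf ε) - Complex.log (((x₀ - δ : ℝ) : ℂ) - zf ε))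
      (𝓝[>] (0 : ℝ)) (𝓝 ((σ : ℂ) * (Real.pi : ℂ) * Complex.I)) := by
    have hrw1 : ∀ ε : ℝ, ((x₀ + δ : ℝ) : ℂ) - zf ε = (δ : ℂ) - (σ : ℂ) * (ε : ℂ) * Complex.I := by
      intro ε; rw [hzf]; push_cast; ring
    have hrw2 : ∀ ε : ℝ, ((x₀ - δ : ℝ) : ℂ) - zf ε = -(δ : ℂ) - (σ : ℂ) * (ε : ℂ) * Complex.I := by
      intro ε; rw [hzf]; push_cast; ring
    have hcont1 : Continuous (fun ε : ℝ => (δ : ℂ) - (σ : ℂ) * (ε : ℂ) * Complex.I) :=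
      continuous_const.sub ((continuous_const.mul Complex.continuous_ofReal).mul continuous_const)
    have hcont2 : Continuous (fun ε : ℝ => -(δ : ℂ) - (σ : ℂ) * (ε : ℂ) * Complex.I) :=
      continuous_const.sub ((continuous_const.mul Complex.continuous_ofReal).mul continuous_const)
    have hc1 : Tendsto (fun ε : ℝ => (δ : ℂ) - (σ : ℂ) * (ε : ℂ) * Complex.I) (𝓝[>] (0:ℝ))
        (𝓝 (δ : ℂ)) := by
      have h := (hcont1.tendsto 0).mono_left (nhdsWithin_le_nhds (s := Ioi (0:ℝ)))
      simpa using h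
    have hlog1 : Tendsto (fun ε : ℝ => Complex.log ((δ : ℂ) - (σ : ℂ) * (ε : ℂ) * Complex.I))
        (𝓝[>] (0:ℝ)) (𝓝 ((Real.log δ : ℝ) : ℂ)) := by
      have hsp : ((δ : ℂ)) ∈ Complex.slitPlane := by
        rw [Complex.mem_slitPlane_iff]
        left
        simpa using hδ
      have h := ((_root_.continuousAt_clog hsp).tendsto).comp hc1
      rwa [Complex.ofReal_log hδ.le]
    have hinner : Tendsto (fun ε : ℝ => -(δ : ℂ) - (σ : ℂ) * (ε : ℂ) * Complex.I) (𝓝[>] (0:ℝ))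
        (𝓝 (-(δ : ℂ))) := by
      have h := (hcont2.tendsto 0).mono_left (nhdsWithin_le_nhds (s := Ioi (0:ℝ)))
      simpa using h
    have habs : ‖(-(δ:ℂ))‖ = δ := by
      rw [norm_neg, Complex.norm_real, Real.norm_eq_abs, _root_.abs_of_pos hδ]
    have hre : (-(δ:ℂ)).re < 0 := by
      rw [Complex.neg_re, Complex.ofReal_re]
      linarith
    have him : (-(δ:ℂ)).im = 0 := by simp
    have hlog2 : Tendsto (fun ε : ℝ => Complex.log (-(δ : ℂ) - (σ : ℂ) * (ε : ℂ) * Complex.I))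
        (𝓝[>] (0:ℝ)) (𝓝 (((Real.log δ : ℝ) : ℂ) - (σ : ℂ) * (Real.pi : ℂ) * Complex.I)) := by
      rcases hσ with h | h
      · subst h
        have hmain := Complex.tendsto_log_nhdsWithin_im_neg_of_re_neg_of_im_zero hre him
        rw [habs] at hmain
        have hsub : Tendsto (fun ε : ℝ => -(δ : ℂ) - ((1:ℝ) : ℂ) * (ε : ℂ) * Complex.I)
            (𝓝[>] (0:ℝ)) (𝓝[{w : ℂ | w.im < 0}] (-(δ:ℂ))) := by
          rw [tendsto_nhdsWithin_iff]
          refine ⟨hinner, ?_⟩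
          filter_upwards [self_mem_nhdsWithin] with ε hε
          have himε : (-(δ:ℂ) - ((1:ℝ) : ℂ) * (ε : ℂ) * Complex.I).im = -ε := by simp
          simp only [mem_setOf_eq, himε]
          simpa using hε
        have h := hmain.comp hsub
        have heq : ((Real.log δ : ℝ) : ℂ) - (((1:ℝ) : ℂ)) * (Real.pi : ℂ) * Complex.I
            = (Real.log δ : ℂ) - Real.pi * Complex.I := by push_cast; ring
        rw [heq]
        exact h
      · subst h
        have hmain := Complex.tendsto_log_nhdsWithin_im_nonneg_of_re_neg_of_im_zero hre him
        rw [habs] at hmain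
        have hsub : Tendsto (fun ε : ℝ => -(δ : ℂ) - ((-1:ℝ) : ℂ) * (ε : ℂ) * Complex.I)
            (𝓝[>] (0:ℝ)) (𝓝[{w : ℂ | 0 ≤ w.im}] (-(δ:ℂ))) := by
          rw [tendsto_nhdsWithin_iff]
          refine ⟨hinner, ?_⟩
          filter_upwards [self_mem_nhdsWithin] with ε hε
          have himε : (-(δ:ℂ) - ((-1:ℝ) : ℂ) * (ε : ℂ) * Complex.I).im = ε := by simp
          simp only [mem_setOf_eq, himε]
          exact (le_of_lt hε)
        have h := hmain.comp hsub
        have heq : ((Real.log δ : ℝ) : ℂ) - (((-1:ℝ) : ℂ)) * (Real.pi : ℂ) * Complex.I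
            = (Real.log δ : ℂ) + Real.pi * Complex.I := by push_cast; ring
        rw [heq]
        exact h
    have h := hlog1.sub hlog2
    have heq : ((Real.log δ : ℝ) : ℂ) -
        (((Real.log δ : ℝ) : ℂ) - (σ : ℂ) * (Real.pi : ℂ) * Complex.I)
        = (σ : ℂ) * (Real.pi : ℂ) * Complex.I := by ring
    rw [heq] at h
    refine h.congr fun ε => ?_
    rw [hrw1, hrw2]
  -- assemble
  have hconst : Tendsto (fun _ : ℝ => G x₀) (𝓝[>] (0:ℝ)) (𝓝 (G x₀)) := tendsto_const_nhds
  have hfinal := hT1.add (hT2.add (hconst.mul hT3lim))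
  rw [← add_assoc] at hfinal
  refine Tendsto.congr' ?_ hfinal
  filter_upwards [self_mem_nhdsWithin] with ε hε
  have hzim' : ((x₀ : ℂ) + (σ : ℂ) * (ε : ℂ) * Complex.I).im ≠ 0 := hzim ε hε
  simp only [hzf]
  rw [hdecomp _ hzim', hT3 _ hzim']

set_option maxHeartbeats 1000000 in
/-- Jump relation of `f(·;λ)` across its cut `(−∞, −λ²s)`:
`f₊(x) − f₋(x) = |x|^α e^{−2λ^{2k}/|x|^k}`. -/
theorem fFun_jump_across_cut (k : ℕ) (hk : 1 ≤ k) (α s : ℝ)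
    (hα : -1 < α) (hs : 0 < s) (lam : ℝ) (hlam : 0 < lam) :
    ∀ x : ℝ, x < -(lam ^ 2 * s) →
      ∃ fp fm : ℂ,
        Tendsto (fun ε : ℝ => fFun k α s lam ((x : ℂ) + ε * Complex.I))
          (𝓝[>] (0 : ℝ)) (𝓝 fp) ∧
        Tendsto (fun ε : ℝ => fFun k α s lam ((x : ℂ) - ε * Complex.I))
          (𝓝[>] (0 : ℝ)) (𝓝 fm) ∧
        fp - fm = (((|x| ^ α * Real.exp (-(2 * lam ^ (2 * k) / |x| ^ k)) : ℝ)) : ℂ) := by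
  intro x hx
  set c : ℝ := -(lam ^ 2 * s) with hc
  have hc0 : c < 0 := by
    have h : 0 < lam ^ 2 * s := by positivity
    rw [hc]; linarith
  have hxc : x < c := hx
  have hx0 : x < 0 := lt_trans hxc hc0
  set g : ℝ → ℝ := fun t => |t| ^ α * Real.exp t * Real.exp (-(2 * lam ^ (2*k) / |t| ^ k))
    with hg
  -- pointwise identity between the complex integrand numerator and `g`
  have hpt : ∀ t : ℝ, t < 0 →
      ((|t| ^ α : ℝ) : ℂ) * Complex.exp (t:ℂ) *
        Complex.exp (2 * (-1:ℂ)^(k+1) * ((lam^(2*k) : ℝ) : ℂ) * (t:ℂ)^(-(k:ℤ)))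
        = ((g t : ℝ) : ℂ) := by
    intro t ht
    have ht0 : t ≠ 0 := ne_of_lt ht
    have hexp_eq : (2 * (-1:ℂ)^(k+1) * ((lam^(2*k):ℝ):ℂ) * (t:ℂ)^(-(k:ℤ)))
        = (((2 * (-1:ℝ)^(k+1) * lam^(2*k) * t^(-(k:ℤ))) : ℝ) : ℂ) := by
      push_cast
      ring
    have htk : t ^ k = (-1:ℝ)^k * |t|^k := by
      rw [_root_.abs_of_neg ht, ← mul_pow, neg_one_mul, neg_neg]
    have hs1 : ((-1:ℝ)^k)⁻¹ = (-1:ℝ)^k := by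
      rcases Nat.even_or_odd k with h | h
      · rw [h.neg_one_pow]; norm_num
      · rw [h.neg_one_pow]; norm_num
    have hs2 : (-1:ℝ)^(k+1) * (-1:ℝ)^k = -1 := by
      rw [← pow_add]
      have hodd : Odd (k + 1 + k) := ⟨k, by ring⟩
      exact hodd.neg_one_pow
    have hreal : 2 * (-1:ℝ)^(k+1) * lam^(2*k) * t^(-(k:ℤ)) = -(2 * lam^(2*k) / |t|^k) := by
      rw [zpow_neg, zpow_natCast, htk]
      calc 2 * (-1:ℝ)^(k+1) * lam^(2*k) * ((-1:ℝ)^k * |t|^k)⁻¹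
          = ((-1:ℝ)^(k+1) * (-1:ℝ)^k) * (2 * lam^(2*k) * (|t|^k)⁻¹) := by
            rw [mul_inv, hs1]; ring
        _ = -(2 * lam^(2*k) / |t|^k) := by rw [hs2, div_eq_mul_inv]; ring
    rw [hexp_eq, hreal, ← Complex.ofReal_exp, ← Complex.ofReal_exp]
    simp only [hg]
    push_cast
    ring
  -- rewrite `fFun` with a real-valued integrand
  have hfF : ∀ z : ℂ, fFun k α s lam z =
      Complex.exp (-z) / (2 * Real.pi * Complex.I) *
        ∫ t in Iic c, ((g t : ℝ) : ℂ) / ((t : ℂ) - z) := by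
    intro z
    unfold fFun
    rw [← hc]
    congr 1
    refine setIntegral_congr_fun measurableSet_Iic fun t ht => ?_
    have ht0 : t < 0 := lt_of_le_of_lt ht hc0
    rw [hpt t ht0]
  -- integrability of the real-valued integrand
  have hmaj0 : IntegrableOn (fun u : ℝ => Real.exp (-u) * u ^ (α + 1 - 1)) (Ioi 0) :=
    Real.GammaIntegral_convergent (by linarith)
  have hmaj : IntegrableOn (fun t : ℝ => Real.exp t * (-t) ^ α) (Iio 0) := by
    rw [← (Measure.measurePreserving_neg (volume : Measure ℝ)).integrableOn_comp_preimage
      (Homeomorph.neg ℝ).measurableEmbedding] at hmaj0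
    have hset : (Neg.neg ⁻¹' Ioi (0:ℝ)) = Iio 0 := by
      ext t; simp
    rw [hset] at hmaj0
    refine hmaj0.congr_fun (fun t _ => ?_) measurableSet_Iio
    simp [Function.comp, add_sub_cancel_right]
  have hcontg : ContinuousOn g (Iic c) := by
    have h0 : ∀ t ∈ Iic c, t ≠ 0 := fun t ht => ne_of_lt (lt_of_le_of_lt ht hc0)
    refine ContinuousOn.mul (ContinuousOn.mul ?_ Real.continuous_exp.continuousOn) ?_
    · exact _root_.continuous_abs.continuousOn.rpow_const fun t ht => Or.inl (_root_.abs_ne_zero.2 (h0 t ht))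
    · refine Real.continuous_exp.comp_continuousOn ?_
      refine ContinuousOn.neg ?_
      exact ContinuousOn.div continuousOn_const ((_root_.continuous_abs.pow k).continuousOn)
        fun t ht => pow_ne_zero _ (_root_.abs_ne_zero.2 (h0 t ht))
  have hGint : IntegrableOn (fun t : ℝ => ((g t : ℝ) : ℂ)) (Iic c) := by
    refine Integrable.mono'
      (hmaj.mono_set (fun t (ht : t ≤ c) => lt_of_le_of_lt ht hc0)) ?_ ?_
    · exact (Complex.continuous_ofReal.comp_continuousOn hcontg).aestronglyMeasurable
        measurableSet_Iic
    · refine (ae_restrict_iff' measurableSet_Iic).2 (ae_of_all _ fun t ht => ?_)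
      have ht0 : t < 0 := lt_of_le_of_lt ht hc0
      have h1 : ‖((g t : ℝ) : ℂ)‖ = |g t| := by
        rw [Complex.norm_real, Real.norm_eq_abs]
      rw [h1]
      have hgnn : 0 ≤ g t := by
        simp only [hg]
        positivity
      rw [_root_.abs_of_nonneg hgnn]
      simp only [hg]
      rw [_root_.abs_of_neg ht0]
      have hle1 : Real.exp (-(2 * lam ^ (2*k) / (-t) ^ k)) ≤ 1 := by
        rw [Real.exp_le_one_iff]
        have : 0 ≤ 2 * lam ^ (2*k) / (-t) ^ k := by
          have h1 : (0:ℝ) < -t := by linarith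
          positivity
        linarith
      calc (-t) ^ α * Real.exp t * Real.exp (-(2 * lam ^ (2*k) / (-t) ^ k))
          ≤ (-t) ^ α * Real.exp t * 1 := by
            refine mul_le_mul_of_nonneg_left hle1 ?_
            have h1 : (0:ℝ) ≤ -t := by linarith
            positivity
        _ = Real.exp t * (-t) ^ α := by ring
  -- `g` is `C¹` at `x`, hence Lipschitz near `x`
  have hCD : ContDiffAt ℝ 1 g x := by
    have hx0' : -x ≠ 0 := ne_of_gt (by linarith)
    have h1 : ContDiffAt ℝ 1 (fun t : ℝ => (-t) ^ α) x :=
      (Real.contDiffAt_rpow_const_of_ne (x := -x) hx0').comp x contDiff_neg.contDiffAt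
    have h2 : ContDiffAt ℝ 1 Real.exp x := Real.contDiff_exp.contDiffAt
    have h3 : ContDiffAt ℝ 1 (fun t : ℝ => Real.exp (-(2 * lam ^ (2*k) / (-t) ^ k))) x := by
      have hden : ContDiffAt ℝ 1 (fun t : ℝ => (-t) ^ k) x :=
        (contDiff_neg.pow k).contDiffAt
      have hdiv : ContDiffAt ℝ 1 (fun t : ℝ => 2 * lam ^ (2*k) / (-t) ^ k) x :=
        contDiffAt_const.div hden (pow_ne_zero _ hx0')
      exact Real.contDiff_exp.contDiffAt.comp x hdiv.neg
    have hcomb : ContDiffAt ℝ 1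
        (fun t : ℝ => (-t) ^ α * Real.exp t * Real.exp (-(2 * lam ^ (2*k) / (-t) ^ k))) x :=
      (h1.mul h2).mul h3
    refine hcomb.congr_of_eventuallyEq ?_
    filter_upwards [Iio_mem_nhds hx0] with t ht
    simp only [hg]
    rw [_root_.abs_of_neg ht]
  obtain ⟨K, U, hU, hlip⟩ := hCD.exists_lipschitzOnWith
  obtain ⟨δ₀, hδ₀, hball⟩ := Metric.mem_nhds_iff.1 hU
  set δ : ℝ := min (δ₀/2) ((c - x)/2) with hδdef
  have hδpos : 0 < δ := lt_min (by linarith) (by linarith)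
  have hδc : x + δ < c := by
    have h := min_le_right (δ₀/2) ((c - x)/2)
    rw [← hδdef] at h
    linarith
  have hIccU : Icc (x - δ) (x + δ) ⊆ U := by
    intro t ht
    apply hball
    rw [Metric.mem_ball, Real.dist_eq]
    have h1 : |t - x| ≤ δ := _root_.abs_le.2 ⟨by linarith [ht.1], by linarith [ht.2]⟩
    have h2 : δ ≤ δ₀/2 := by
      rw [hδdef]; exact min_le_left _ _
    linarith
  have hLb : ∀ t ∈ Icc (x - δ) (x + δ),
      ‖((g t : ℝ) : ℂ) - ((g x : ℝ) : ℂ)‖ ≤ (K : ℝ) * |t - x| := by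
    intro t ht
    have hx_mem : x ∈ Icc (x - δ) (x + δ) := ⟨by linarith, by linarith⟩
    have h2 := hlip.dist_le_mul t (hIccU ht) x (hIccU hx_mem)
    rw [Real.dist_eq, Real.dist_eq] at h2
    calc ‖((g t : ℝ) : ℂ) - ((g x : ℝ) : ℂ)‖ = |g t - g x| := by
          rw [← Complex.ofReal_sub, Complex.norm_real, Real.norm_eq_abs]
      _ ≤ (K : ℝ) * |t - x| := h2
  -- the main one-sided limits
  have hmain : ∀ σ : ℝ, σ = 1 ∨ σ = -1 →
      Tendsto (fun ε : ℝ => fFun k α s lam ((x:ℂ) + (σ:ℂ) * (ε:ℂ) * Complex.I)) (𝓝[>] (0:ℝ))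
        (𝓝 (Complex.exp (-(x:ℂ)) / (2 * Real.pi * Complex.I) *
          ((∫ t in Iic (x - δ) ∪ Ioc (x + δ) c, ((g t : ℝ) : ℂ) / ((t:ℂ) - (x:ℂ))) +
           (∫ t in Ioc (x - δ) (x + δ), (((g t : ℝ) : ℂ) - ((g x : ℝ) : ℂ)) / ((t:ℂ) - (x:ℂ))) +
           ((g x : ℝ) : ℂ) * ((σ : ℂ) * (Real.pi : ℂ) * Complex.I)))) := by
    intro σ hσ
    have hI := aux_tendsto_cauchy (fun t => ((g t : ℝ) : ℂ)) c x δ σ hσ hδpos hδc hGint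
      (K : ℝ) hLb
    have hexp : Tendsto (fun ε : ℝ =>
        Complex.exp (-((x:ℂ) + (σ:ℂ) * (ε:ℂ) * Complex.I)) / (2 * Real.pi * Complex.I))
        (𝓝[>] (0:ℝ)) (𝓝 (Complex.exp (-(x:ℂ)) / (2 * Real.pi * Complex.I))) := by
      have hcont : Continuous fun ε : ℝ =>
          Complex.exp (-((x:ℂ) + (σ:ℂ) * (ε:ℂ) * Complex.I)) / (2 * Real.pi * Complex.I) := by
        apply Continuous.div_const
        exact Complex.continuous_exp.comp (continuous_const.add
          ((continuous_const.mul Complex.continuous_ofReal).mul continuous_const)).neg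
      have h := (hcont.tendsto 0).mono_left (nhdsWithin_le_nhds (s := Ioi (0:ℝ)))
      simpa using h
    have h := hexp.mul hI
    refine h.congr fun ε => ?_
    rw [hfF]
  have hplus := (hmain 1 (Or.inl rfl)).congr
    (fun ε : ℝ => congrArg (fFun k α s lam)
      (show ((x:ℝ):ℂ) + (((1:ℝ)):ℂ) * ((ε:ℝ):ℂ) * Complex.I
          = ((x:ℝ):ℂ) + ((ε:ℝ):ℂ) * Complex.I by push_cast; ring))
  have hminus := (hmain (-1) (Or.inr rfl)).congr
    (fun ε : ℝ => congrArg (fFun k α s lam)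
      (show ((x:ℝ):ℂ) + (((-1:ℝ)):ℂ) * ((ε:ℝ):ℂ) * Complex.I
          = ((x:ℝ):ℂ) - ((ε:ℝ):ℂ) * Complex.I by push_cast; ring))
  refine ⟨_, _, hplus, hminus, ?_⟩
  · have h2 : (2 * (Real.pi:ℂ) * Complex.I) ≠ 0 := by
      simp [Real.pi_ne_zero, Complex.I_ne_zero]
    have hEg : Complex.exp (-(x:ℂ)) * ((g x : ℝ) : ℂ)
        = ((|x| ^ α * Real.exp (-(2 * lam ^ (2 * k) / |x| ^ k)) : ℝ) : ℂ) := by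
      rw [← Complex.ofReal_neg, ← Complex.ofReal_exp, ← Complex.ofReal_mul]
      congr 1
      simp only [hg]
      have hee : Real.exp (-x) * Real.exp x = 1 := by
        rw [← Real.exp_add]; simp
      calc Real.exp (-x) * (|x| ^ α * Real.exp x * Real.exp (-(2 * lam ^ (2*k) / |x| ^ k)))
          = |x| ^ α * Real.exp (-(2 * lam ^ (2*k) / |x| ^ k)) * (Real.exp (-x) * Real.exp x) := by
            ring
        _ = |x| ^ α * Real.exp (-(2 * lam ^ (2 * k) / |x| ^ k)) := by rw [hee, mul_one]
    rw [← hEg]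
    have hπ : ((Real.pi : ℝ) : ℂ) ≠ 0 := Complex.ofReal_ne_zero.2 Real.pi_ne_zero
    rw [← mul_sub, add_sub_add_left_eq_sub]
    push_cast
    field_simp
    ring
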